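/- arXiv:1502.06167 — 5 statements merged into one kernel-verified Lean document; each statement's English description precedes it below -/
import Mathlib

section
/- Let α, β, κ be strictly positive real numbers and R > 0, and for r ≥ 0 let A(r) be the 2×2 real matrix with rows (0, −αr) and (βr, −κr²). Then there exist constants θ > 0 and C > 0 such that for all t ≥ 0 and all r with 0 ≤ r ≤ R, every entry of the matrix exp(t·A(r)) has absolute value at most C·e^{−θ r² t}. -/
set_option maxHeartbeats 1000000

open NormedSpace

private lemma entry_hasDerivAt' (A : Matrix (Fin 2) (Fin 2) ℝ) (i j : Fin 2) (t : ℝ) :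
    HasDerivAt (fun s : ℝ => (NormedSpace.exp (s • A)) i j)
      ((A * NormedSpace.exp (t • A)) i j) t := by
  letI : SeminormedRing (Matrix (Fin 2) (Fin 2) ℝ) := Matrix.linftyOpSemiNormedRing
  letI : NormedRing (Matrix (Fin 2) (Fin 2) ℝ) := Matrix.linftyOpNormedRing
  letI : NormedAlgebra ℝ (Matrix (Fin 2) (Fin 2) ℝ) := Matrix.linftyOpNormedAlgebra
  have h := hasDerivAt_exp_smul_const' A t
  let L : Matrix (Fin 2) (Fin 2) ℝ →ₗ[ℝ] ℝ :=
    { toFun := fun M => M i j, map_add' := fun _ _ => rfl, map_smul' := fun _ _ => rfl }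
  have hc := (LinearMap.toContinuousLinearMap L).hasFDerivAt.comp_hasDerivAt t h
  exact hc

private lemma bracket_ineq (α β κ ε lam r c u : ℝ) (hα : 0 < α) (hβ : 0 < β) (hκ : 0 < κ)
    (hε : 0 < ε) (h2 : ε ≤ κ/2) (h3r : 2*ε*κ*r^2 ≤ α*β)
    (hlam0 : 0 ≤ lam) (hlam1 : lam ≤ 2*ε/3) (hlam2 : lam ≤ κ/3) :
    (lam - 2*ε)*β*c^2 + (lam + 2*ε - 2*κ)*α*u^2 + 2*ε*(κ - lam)*r*(c*u) ≤ 0 := by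
  have hklam : 0 ≤ κ - lam := by linarith
  have hsq : 0 ≤ ε*(κ - lam) * (β*c - κ*r*u)^2 := by positivity
  have P3 : 0 ≤ κ^2*((α*β - 2*ε*κ*r^2)*u^2) :=
    mul_nonneg (sq_nonneg κ) (mul_nonneg (by linarith) (sq_nonneg u))
  have P4 : 0 ≤ ε*lam*κ^2*r^2*u^2 := by positivity
  have P5 : 0 ≤ β^2*κ*((2*ε/3 - lam)*c^2) :=
    mul_nonneg (by positivity) (mul_nonneg (by linarith) (sq_nonneg c))
  have P6 : 0 ≤ ε*lam*β^2*c^2 := by positivity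
  have P7 : 0 ≤ ε*κ*β^2*c^2 := by positivity
  have P8 : 0 ≤ α*κ*β*((κ/3 - lam)*u^2) :=
    mul_nonneg (by positivity) (mul_nonneg (by linarith) (sq_nonneg u))
  have P9 : 0 ≤ α*β*κ^2*u^2 := by positivity
  have P10 : 0 ≤ α*κ*β*((κ/2 - ε)*u^2) :=
    mul_nonneg (by positivity) (mul_nonneg (by linarith) (sq_nonneg u))
  have hB : β*κ*((lam - 2*ε)*β*c^2 + (lam + 2*ε - 2*κ)*α*u^2 + 2*ε*(κ - lam)*r*(c*u)) ≤ 0 := by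
    nlinarith [hsq, P3, P4, P5, P6, P7, P8, P9, P10]
  nlinarith [hB, mul_pos hβ hκ]

private lemma key_ineq (α β κ ε lam r c u : ℝ) (hα : 0 < α) (hβ : 0 < β) (hκ : 0 < κ)
    (hε : 0 < ε) (h2 : ε ≤ κ/2) (h3r : 2*ε*κ*r^2 ≤ α*β)
    (hlam0 : 0 ≤ lam) (hlam1 : lam ≤ 2*ε/3) (hlam2 : lam ≤ κ/3) (hr : 0 ≤ r) :
    2*β*c*(-(α*r)*u) + 2*α*u*(β*r*c - κ*r^2*u)
      - 2*ε*r*((-(α*r)*u)*u + c*(β*r*c - κ*r^2*u))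
      + lam*r^2*(β*c^2 + α*u^2 - 2*ε*r*(c*u)) ≤ 0 := by
  have hB := bracket_ineq α β κ ε lam r c u hα hβ hκ hε h2 h3r hlam0 hlam1 hlam2
  have := mul_nonpos_of_nonneg_of_nonpos (sq_nonneg r) hB
  nlinarith [this]

private lemma coercive (α β ε r c u : ℝ) (hβ : 0 < β)
    (h1 : 4*ε^2*r^2 ≤ α*β) :
    (β/2)*c^2 + (α/2)*u^2 ≤ β*c^2 + α*u^2 - 2*ε*r*(c*u) := by
  have hs : 0 ≤ (β*c - 2*ε*r*u)^2 := sq_nonneg _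
  have h2 : 0 ≤ (α*β - 4*ε^2*r^2)*u^2 := mul_nonneg (by linarith) (sq_nonneg u)
  nlinarith [hs, h2, mul_pos hβ hβ, sq_nonneg c, sq_nonneg u]

/-- Uniform Green's-matrix bound (γ = 0 case of Lemma 3.2): for strictly
positive `α, β, κ` and `R > 0`, there are `θ > 0` and `C > 0` such that for all
`t ≥ 0` and `0 ≤ r ≤ R`, every entry of `exp (t · A(r))` is bounded by
`C·e^{−θ r² t}`, where `A(r) = !![0, -αr; βr, -κr²]`. -/
theorem exp_symbol_matrix_entry_bound (α β κ R : ℝ)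
    (hα : 0 < α) (hβ : 0 < β) (hκ : 0 < κ) (hR : 0 < R) :
    ∃ θ : ℝ, 0 < θ ∧ ∃ C : ℝ, 0 < C ∧
      ∀ t : ℝ, 0 ≤ t → ∀ r : ℝ, 0 ≤ r → r ≤ R → ∀ i j : Fin 2,
        |(NormedSpace.exp
            (t • (!![0, -α * r; β * r, -κ * r ^ 2] : Matrix (Fin 2) (Fin 2) ℝ))) i j|
          ≤ C * Real.exp (-θ * r ^ 2 * t) := by
  have hab : 0 < α * β := mul_pos hα hβ
  set ε : ℝ := min (Real.sqrt (α*β)/(2*R)) (min (κ/2) (α*β/(2*κ*R^2))) with hεdef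
  have hε : 0 < ε := by
    refine lt_min (by positivity) (lt_min (by positivity) (by positivity))
  have hεR : ε ≤ Real.sqrt (α*β)/(2*R) := min_le_left _ _
  have h1R : 4*ε^2*R^2 ≤ α*β := by
    have h2εR : 2*ε*R ≤ Real.sqrt (α*β) := by
      rw [le_div_iff₀ (by positivity)] at hεR
      linarith [hεR]
    have := mul_self_le_mul_self (by positivity : (0:ℝ) ≤ 2*ε*R) h2εR
    rw [Real.mul_self_sqrt hab.le] at this
    nlinarith [this]
  have h2 : ε ≤ κ/2 := le_trans (min_le_right _ _) (min_le_left _ _)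
  have h3 : 2*ε*κ*R^2 ≤ α*β := by
    have h3' : ε ≤ α*β/(2*κ*R^2) :=
      le_trans (min_le_right _ _) (min_le_right (κ/2) (α*β/(2*κ*R^2)))
    rw [le_div_iff₀ (by positivity)] at h3'
    nlinarith [h3']
  set lam : ℝ := min (2*ε/3) (κ/3) with hlamdef
  have hlam : 0 < lam := lt_min (by positivity) (by positivity)
  have hlam1 : lam ≤ 2*ε/3 := min_le_left _ _
  have hlam2 : lam ≤ κ/3 := min_le_right _ _
  set M : ℝ := max α β with hM
  set m : ℝ := min α β with hm
  have hMpos : 0 < M := lt_max_of_lt_left hα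
  have hmpos : 0 < m := lt_min hα hβ
  refine ⟨lam/2, by positivity, Real.sqrt (2*M/m), Real.sqrt_pos.2 (by positivity), ?_⟩
  intro t ht r hr hrR i j
  set A : Matrix (Fin 2) (Fin 2) ℝ := !![0, -α * r; β * r, -κ * r ^ 2] with hA
  set c : ℝ → ℝ := fun s => (NormedSpace.exp (s • A)) 0 j with hcdef
  set u : ℝ → ℝ := fun s => (NormedSpace.exp (s • A)) 1 j with hudef
  have hc : ∀ s, HasDerivAt c (-(α*r) * u s) s := by
    intro s
    have h := entry_hasDerivAt' A 0 j s
    have e : (A * NormedSpace.exp (s • A)) 0 j = -(α*r) * u s := by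
      rw [Matrix.mul_apply, Fin.sum_univ_two]
      simp [hA, hudef]
    rwa [e] at h
  have hu : ∀ s, HasDerivAt u (β*r * c s - κ*r^2 * u s) s := by
    intro s
    have h := entry_hasDerivAt' A 1 j s
    have e : (A * NormedSpace.exp (s • A)) 1 j = β*r * c s - κ*r^2 * u s := by
      rw [Matrix.mul_apply, Fin.sum_univ_two]
      simp [hA, hcdef, hudef]
      ring
    rwa [e] at h
  set g : ℝ → ℝ := fun s => β*(c s)^2 + α*(u s)^2 - 2*ε*r*(c s * u s) with hgdef
  have hg : ∀ s, HasDerivAt g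
      (2*β*(c s)*(-(α*r)*u s) + 2*α*(u s)*(β*r*c s - κ*r^2*u s)
        - 2*ε*r*((-(α*r)*u s)*u s + c s*(β*r*c s - κ*r^2*u s))) s := by
    intro s
    have h1 := (((hc s).pow 2).const_mul β)
    have h2 := (((hu s).pow 2).const_mul α)
    have h3 := (((hc s).mul (hu s)).const_mul (2*ε*r))
    have := (h1.add h2).sub h3
    exact this.congr_deriv (by ring)
  set lr : ℝ := lam * r^2 with hlr
  set h : ℝ → ℝ := fun s => g s * Real.exp (lr * s) with hhdef
  have hh : ∀ s, HasDerivAt h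
      ((2*β*(c s)*(-(α*r)*u s) + 2*α*(u s)*(β*r*c s - κ*r^2*u s)
        - 2*ε*r*((-(α*r)*u s)*u s + c s*(β*r*c s - κ*r^2*u s))
        + lr * g s) * Real.exp (lr * s)) s := by
    intro s
    have he : HasDerivAt (fun s : ℝ => Real.exp (lr * s)) (Real.exp (lr * s) * lr) s := by
      simpa [Function.comp_def] using (Real.hasDerivAt_exp (lr * s)).comp s ((hasDerivAt_id s).const_mul lr)
    have := (hg s).mul he
    exact this.congr_deriv (by ring)
  have h3r : 2*ε*κ*r^2 ≤ α*β := by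
    have hrr : r^2 ≤ R^2 := by nlinarith
    nlinarith [mul_pos hε hκ]
  have hDnonpos : ∀ s, deriv h s ≤ 0 := by
    intro s
    rw [(hh s).deriv]
    have hK := key_ineq α β κ ε lam r (c s) (u s) hα hβ hκ hε h2 h3r hlam.le hlam1 hlam2 hr
    have : (2*β*(c s)*(-(α*r)*u s) + 2*α*(u s)*(β*r*c s - κ*r^2*u s)
        - 2*ε*r*((-(α*r)*u s)*u s + c s*(β*r*c s - κ*r^2*u s))
        + lr * g s) ≤ 0 := by
      rw [hlr]
      exact hK
    exact mul_nonpos_of_nonpos_of_nonneg this (Real.exp_pos _).le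
  have hanti : Antitone h :=
    antitone_of_deriv_nonpos (fun s => (hh s).differentiableAt) hDnonpos
  have hht : h t ≤ h 0 := hanti ht
  have hg0 : g 0 ≤ M := by
    have hone : (NormedSpace.exp ((0:ℝ) • A)) = 1 := by
      rw [zero_smul, NormedSpace.exp_zero]
    rw [hgdef]
    simp only [hcdef, hudef, hone]
    fin_cases j
    · simpa [Matrix.one_apply, hM] using le_max_right α β
    · simpa [Matrix.one_apply, hM] using le_max_left α β
  have hh0 : h 0 = g 0 := by simp [hhdef]
  have hgtle : g t * Real.exp (lr * t) ≤ M := by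
    calc g t * Real.exp (lr * t) = h t := rfl
      _ ≤ h 0 := hht
      _ = g 0 := hh0
      _ ≤ M := hg0
  have hE := Real.exp_pos (lr * t)
  have hgt : g t ≤ M * Real.exp (-(lr * t)) := by
    rw [Real.exp_neg, ← div_eq_mul_inv, le_div_iff₀ hE]
    exact hgtle
  have h1r : 4*ε^2*r^2 ≤ α*β := by
    nlinarith [h1R, mul_self_le_mul_self hr hrR, sq_nonneg ε]
  have hco := coercive α β ε r (c t) (u t) hβ h1r
  have hmα : m ≤ α := min_le_left α β
  have hmβ : m ≤ β := min_le_right α β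
  have hgco : (β/2)*(c t)^2 + (α/2)*(u t)^2 ≤ g t := by
    rw [hgdef]
    exact hco
  clear_value g c u A lr lam M m ε
  have hfinal : ∀ x : ℝ, (m/2)*x^2 ≤ g t →
      |x| ≤ Real.sqrt (2*M/m) * Real.exp (-(lam/2) * r^2 * t) := by
    intro x hx
    have hX2 : x^2 ≤ 2*M/m * Real.exp (-(lr*t)) := by
      rw [div_mul_eq_mul_div, le_div_iff₀ hmpos]
      nlinarith [hx, hgt]
    have hC2 : (Real.sqrt (2*M/m))^2 = 2*M/m := Real.sq_sqrt (by positivity)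
    have hexp2 : (Real.exp (-(lam/2) * r^2 * t))^2 = Real.exp (-(lr*t)) := by
      rw [sq, ← Real.exp_add, hlr]
      ring_nf
    have hrhs : (0:ℝ) ≤ Real.sqrt (2*M/m) * Real.exp (-(lam/2) * r^2 * t) := by positivity
    have hXle : x^2 ≤ (Real.sqrt (2*M/m) * Real.exp (-(lam/2) * r^2 * t))^2 := by
      rw [mul_pow, hC2, hexp2]
      exact hX2
    calc |x| = Real.sqrt (x^2) := (Real.sqrt_sq_eq_abs x).symm
      _ ≤ Real.sqrt ((Real.sqrt (2*M/m) * Real.exp (-(lam/2) * r^2 * t))^2) :=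
          Real.sqrt_le_sqrt hXle
      _ = Real.sqrt (2*M/m) * Real.exp (-(lam/2) * r^2 * t) := Real.sqrt_sq hrhs
  have hXor : (NormedSpace.exp (t • A)) i j = c t ∨ (NormedSpace.exp (t • A)) i j = u t := by
    fin_cases i
    · exact Or.inl (by simp only [hcdef]; rfl)
    · exact Or.inr (by simp only [hudef]; rfl)
  rcases hXor with hXe | hXe
  · rw [hXe]
    exact hfinal _ (by nlinarith [sq_nonneg (u t), sq_nonneg (c t), hgco])
  · rw [hXe]
    exact hfinal _ (by nlinarith [sq_nonneg (u t), sq_nonneg (c t), hgco])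
end

section
/- Let R ∈ ℤ. There exists a constant C > 0 such that for every s > 0, the sum over all integers q ≤ R of e^{−(2/9)·4^q·s} · (1 − e^{−(20/3)·4^q·s})^{1/2} is at most C. -/
open Real

private lemma aux_pow_ge (n : ℕ) : (n : ℝ) + 1 ≤ (4 : ℝ) ^ n := by
  induction n with
  | zero => norm_num
  | succ k ih =>
    push_cast
    calc (k : ℝ) + 1 + 1 ≤ 4 * ((k : ℝ) + 1) := by linarith [Nat.cast_nonneg (α := ℝ) k]
    _ ≤ 4 * 4 ^ k := by linarith
    _ = 4 ^ (k + 1) := by ring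

/-- Uniform-in-time series bound (equation (25) of the paper): for `R ∈ ℤ`
there is `C > 0` such that for all `s > 0`,
`∑_{q ≤ R} e^{−(2/9)·4^q·s} (1 − e^{−(20/3)·4^q·s})^{1/2} ≤ C`. -/
theorem sum_exp_annulus_bound (R : ℤ) :
    ∃ C : ℝ, 0 < C ∧ ∀ s : ℝ, 0 < s →
      Summable (fun q : {q : ℤ // q ≤ R} =>
        Real.exp (-(2 / 9) * (4 : ℝ) ^ (q : ℤ) * s)
          * Real.sqrt (1 - Real.exp (-(20 / 3) * (4 : ℝ) ^ (q : ℤ) * s))) ∧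
      (∑' q : {q : ℤ // q ≤ R},
        Real.exp (-(2 / 9) * (4 : ℝ) ^ (q : ℤ) * s)
          * Real.sqrt (1 - Real.exp (-(20 / 3) * (4 : ℝ) ^ (q : ℤ) * s))) ≤ C := by
  set r : ℝ := Real.exp (-(2 / 9)) with hrdef
  have hr0 : 0 < r := Real.exp_pos _
  have hr1 : r < 1 := by
    rw [hrdef]; exact Real.exp_lt_one_iff.mpr (by norm_num)
  set A : ℝ := Real.sqrt (20 / 3) with hAdef
  have hA0 : 0 < A := Real.sqrt_pos.mpr (by norm_num)
  refine ⟨2 * A + r / (1 - r), add_pos (by positivity) (div_pos hr0 (by linarith)), ?_⟩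
  intro s hs
  set t : ℤ → ℝ := fun q =>
    Real.exp (-(2 / 9) * (4 : ℝ) ^ (q : ℤ) * s)
      * Real.sqrt (1 - Real.exp (-(20 / 3) * (4 : ℝ) ^ (q : ℤ) * s)) with htdef
  have ht0 : ∀ q, 0 ≤ t q := fun q =>
    mul_nonneg (Real.exp_nonneg _) (Real.sqrt_nonneg _)
  set m : ℤ := Int.log 4 s⁻¹ with hmdef
  have h4m : (4 : ℝ) ^ m ≤ s⁻¹ := by
    have h := Int.zpow_log_le_self (b := 4) (r := s⁻¹) (by norm_num) (by positivity)
    exact_mod_cast h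
  have h4m' : s⁻¹ < (4 : ℝ) ^ (m + 1) := by
    have h := Int.lt_zpow_succ_log_self (b := 4) (by norm_num) (r := s⁻¹)
    exact_mod_cast h
  -- the majorant
  set g : ℤ → ℝ := fun q =>
    if q ≤ m then A * (2 : ℝ) ^ q * Real.sqrt s else r * r ^ (q - (m + 1)).toNat with hgdef
  have hg0 : ∀ q, 0 ≤ g q := by
    intro q
    simp only [hgdef]
    split
    · positivity
    · positivity
  -- pointwise bound t ≤ g
  have htg : ∀ q, t q ≤ g q := by
    intro q
    have h4q : (0 : ℝ) < (4 : ℝ) ^ q := by positivity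
    simp only [hgdef]
    split
    · rename_i hq
      -- small q : exp ≤ 1, sqrt(1 - e^{-x}) ≤ sqrt x
      have h1 : Real.exp (-(2 / 9) * (4 : ℝ) ^ q * s) ≤ 1 := by
        apply Real.exp_le_one_iff.mpr
        nlinarith
      have hx0 : (0 : ℝ) ≤ 20 / 3 * (4 : ℝ) ^ q * s := by positivity
      have h2 : 1 - Real.exp (-(20 / 3) * (4 : ℝ) ^ q * s) ≤ 20 / 3 * (4 : ℝ) ^ q * s := by
        have := Real.add_one_le_exp (-(20 / 3 * (4 : ℝ) ^ q * s))
        have h3 : Real.exp (-(20 / 3) * (4 : ℝ) ^ q * s)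
            = Real.exp (-(20 / 3 * (4 : ℝ) ^ q * s)) := by ring_nf
        rw [h3]; linarith
      have h4 : Real.sqrt (1 - Real.exp (-(20 / 3) * (4 : ℝ) ^ q * s))
          ≤ Real.sqrt (20 / 3 * (4 : ℝ) ^ q * s) := Real.sqrt_le_sqrt h2
      have h5 : Real.sqrt (20 / 3 * (4 : ℝ) ^ q * s) = A * (2 : ℝ) ^ q * Real.sqrt s := by
        rw [hAdef]
        rw [show (20 / 3 : ℝ) * (4 : ℝ) ^ q * s = (20 / 3) * ((4 : ℝ) ^ q * s) by ring]
        rw [Real.sqrt_mul (by norm_num), Real.sqrt_mul (le_of_lt h4q)]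
        have : (4 : ℝ) ^ q = ((2 : ℝ) ^ q) ^ 2 := by
          rw [show (4:ℝ) = 2 * 2 by norm_num, mul_zpow, sq]
        rw [this, Real.sqrt_sq (by positivity)]
        ring
      calc t q ≤ 1 * Real.sqrt (1 - Real.exp (-(20 / 3) * (4 : ℝ) ^ q * s)) := by
            rw [htdef]; exact mul_le_mul_of_nonneg_right h1 (Real.sqrt_nonneg _)
        _ = Real.sqrt (1 - Real.exp (-(20 / 3) * (4 : ℝ) ^ q * s)) := one_mul _
        _ ≤ A * (2 : ℝ) ^ q * Real.sqrt s := h5 ▸ h4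
    · rename_i hq
      push_neg at hq
      set n : ℕ := (q - (m + 1)).toNat with hndef
      have hqn : (q : ℤ) = (m + 1) + n := by
        rw [hndef, Int.toNat_of_nonneg (by omega)]; ring
      -- 4^q s ≥ 4^n * (4^{m+1} s) ≥ 4^n ≥ n+1
      have hm1s : 1 < (4 : ℝ) ^ (m + 1) * s := (inv_lt_iff_one_lt_mul₀ hs).mp h4m'
      have h4qs : ((n : ℝ) + 1) ≤ (4 : ℝ) ^ q * s := by
        have h1 : (4 : ℝ) ^ q = (4 : ℝ) ^ (n : ℤ) * (4 : ℝ) ^ (m + 1) := by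
          rw [hqn, zpow_add₀ (by norm_num : (4:ℝ) ≠ 0)]; ring
        have h2 : (4 : ℝ) ^ (n : ℤ) = (4 : ℝ) ^ n := zpow_natCast _ _
        have h3 : ((n : ℝ) + 1) ≤ (4 : ℝ) ^ n := aux_pow_ge n
        have h4 : (0 : ℝ) < (4:ℝ) ^ n := by positivity
        calc ((n : ℝ) + 1) ≤ (4 : ℝ) ^ n := h3
          _ ≤ (4 : ℝ) ^ n * ((4 : ℝ) ^ (m+1) * s) := le_mul_of_one_le_right (le_of_lt h4) hm1s.le
          _ = (4 : ℝ) ^ q * s := by rw [h1, h2]; ring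
      have hsqrt1 : Real.sqrt (1 - Real.exp (-(20 / 3) * (4 : ℝ) ^ q * s)) ≤ 1 :=
        Real.sqrt_le_one.mpr
          (by linarith [Real.exp_pos (-(20 / 3) * (4 : ℝ) ^ q * s)])
      have hexp : Real.exp (-(2 / 9) * (4 : ℝ) ^ q * s) ≤ r * r ^ n := by
        have : r * r ^ n = Real.exp (-(2/9) * ((n : ℝ) + 1)) := by
          rw [hrdef, ← Real.exp_nat_mul, ← Real.exp_add]
          ring_nf
        rw [this]
        apply Real.exp_le_exp.mpr
        nlinarith
      calc t q ≤ Real.exp (-(2 / 9) * (4 : ℝ) ^ q * s) * 1 := by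
            rw [htdef]
            exact mul_le_mul_of_nonneg_left hsqrt1 (Real.exp_nonneg _)
        _ = Real.exp (-(2 / 9) * (4 : ℝ) ^ q * s) := mul_one _
        _ ≤ r * r ^ n := hexp
  -- split g into two summable pieces
  set g1 : ℤ → ℝ := fun q => if q ≤ m then A * (2 : ℝ) ^ q * Real.sqrt s else 0 with hg1def
  set g2 : ℤ → ℝ := fun q => if m + 1 ≤ q then r * r ^ (q - (m + 1)).toNat else 0 with hg2def
  have hgsplit : ∀ q, g q = g1 q + g2 q := by
    intro q
    simp only [hgdef, hg1def, hg2def]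
    by_cases hq : q ≤ m
    · rw [if_pos hq, if_pos hq, if_neg (by omega)]; ring
    · rw [if_neg hq, if_neg hq, if_pos (by omega)]; ring
  -- g1 : geometric via n ↦ m - n
  have hι1 : Function.Injective (fun n : ℕ => m - (n : ℤ)) := by
    intro a b hab; simpa using hab
  have hrange1 : ∀ a ∉ Set.range (fun n : ℕ => m - (n : ℤ)), g1 a = 0 := by
    intro a ha
    simp only [hg1def]
    rw [if_neg]
    intro hle
    exact ha ⟨(m - a).toNat, by simp; omega⟩
  have hcomp1 : (g1 ∘ fun n : ℕ => m - (n : ℤ))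
      = fun n : ℕ => (A * (2 : ℝ) ^ m * Real.sqrt s) * (1 / 2 : ℝ) ^ n := by
    funext n
    simp only [Function.comp, hg1def]
    rw [if_pos (by omega)]
    rw [zpow_sub₀ (by norm_num : (2:ℝ) ≠ 0), zpow_natCast]
    field_simp
    rw [← mul_pow]; norm_num
  have hsum1 : Summable (g1 ∘ fun n : ℕ => m - (n : ℤ)) := by
    rw [hcomp1]
    exact (summable_geometric_of_lt_one (by norm_num) (by norm_num)).mul_left _
  have hg1sum : Summable g1 := (hι1.summable_iff hrange1).mp hsum1
  have h2ms : (2 : ℝ) ^ m * Real.sqrt s ≤ 1 := by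
    have hsq : ((2 : ℝ) ^ m * Real.sqrt s) ^ 2 = (4 : ℝ) ^ m * s := by
      rw [mul_pow, Real.sq_sqrt hs.le]
      congr 1
      rw [show (4:ℝ) = 2 * 2 by norm_num, mul_zpow, sq]
    have h4ms : (4 : ℝ) ^ m * s ≤ 1 := by
      calc (4:ℝ)^m * s ≤ s⁻¹ * s := mul_le_mul_of_nonneg_right h4m hs.le
        _ = 1 := inv_mul_cancel₀ hs.ne'
    nlinarith [Real.sqrt_nonneg s, zpow_pos (by norm_num : (0:ℝ) < 2) m]
  have hg1tsum : ∑' q, g1 q ≤ 2 * A := by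
    rw [← hι1.tsum_eq (by
      intro a ha
      simp only [Function.mem_support] at ha
      by_contra hna
      exact ha (hrange1 a hna))]
    have : ∑' n : ℕ, (g1 ∘ fun n : ℕ => m - (n : ℤ)) n
        = (A * (2 : ℝ) ^ m * Real.sqrt s) * (1 - 1/2 : ℝ)⁻¹ := by
      rw [hcomp1, tsum_mul_left, tsum_geometric_of_lt_one (by norm_num) (by norm_num)]
    rw [show (∑' n : ℕ, g1 (m - (n : ℤ))) = ∑' n : ℕ, (g1 ∘ fun n : ℕ => m - (n : ℤ)) n from rfl,
      this]
    rw [show ((1 : ℝ) - 1/2)⁻¹ = 2 by norm_num]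
    calc A * (2:ℝ)^m * Real.sqrt s * 2 = 2 * A * ((2:ℝ)^m * Real.sqrt s) := by ring
      _ ≤ 2 * A * 1 := by
          apply mul_le_mul_of_nonneg_left h2ms (by positivity)
      _ = 2 * A := mul_one _
  -- g2 : geometric via n ↦ m + 1 + n
  have hι2 : Function.Injective (fun n : ℕ => m + 1 + (n : ℤ)) := by
    intro a b hab; simpa using hab
  have hrange2 : ∀ a ∉ Set.range (fun n : ℕ => m + 1 + (n : ℤ)), g2 a = 0 := by
    intro a ha
    simp only [hg2def]
    rw [if_neg]
    intro hle
    exact ha ⟨(a - (m + 1)).toNat, by simp; omega⟩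
  have hcomp2 : (g2 ∘ fun n : ℕ => m + 1 + (n : ℤ)) = fun n : ℕ => r * r ^ n := by
    funext n
    simp only [Function.comp, hg2def]
    rw [if_pos (by omega)]
    congr 1
    congr 1
    omega
  have hsum2 : Summable (g2 ∘ fun n : ℕ => m + 1 + (n : ℤ)) := by
    rw [hcomp2]
    exact (summable_geometric_of_lt_one hr0.le hr1).mul_left _
  have hg2sum : Summable g2 := (hι2.summable_iff hrange2).mp hsum2
  have hg2tsum : ∑' q, g2 q ≤ r / (1 - r) := by
    rw [← hι2.tsum_eq (by
      intro a ha
      simp only [Function.mem_support] at ha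
      by_contra hna
      exact ha (hrange2 a hna))]
    have : ∑' n : ℕ, (g2 ∘ fun n : ℕ => m + 1 + (n : ℤ)) n = r * (1 - r)⁻¹ := by
      rw [hcomp2, tsum_mul_left, tsum_geometric_of_lt_one hr0.le hr1]
    rw [show (∑' n : ℕ, g2 (m + 1 + (n : ℤ))) = ∑' n : ℕ, (g2 ∘ fun n : ℕ => m + 1 + (n : ℤ)) n
      from rfl, this, div_eq_mul_inv]
  have hgsum : Summable g := by
    have := hg1sum.add hg2sum
    exact this.congr fun q => (hgsplit q).symm
  have hgtsum : ∑' q, g q ≤ 2 * A + r / (1 - r) := by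
    calc ∑' q, g q = ∑' q, (g1 q + g2 q) := by exact tsum_congr hgsplit
      _ = (∑' q, g1 q) + ∑' q, g2 q := Summable.tsum_add hg1sum hg2sum
      _ ≤ 2 * A + r / (1 - r) := add_le_add hg1tsum hg2tsum
  -- summability of t over ℤ
  have htsum : Summable t := Summable.of_nonneg_of_le ht0 htg hgsum
  refine ⟨htsum.subtype _, ?_⟩
  have hle1 : (∑' q : {q : ℤ // q ≤ R}, t q) ≤ ∑' q : ℤ, t q :=
    Summable.tsum_subtype_le t {q : ℤ | q ≤ R} ht0 htsum
  have hle2 : (∑' q : ℤ, t q) ≤ ∑' q, g q := Summable.tsum_le_tsum htg htsum hgsum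
  exact le_trans hle1 (le_trans hle2 hgtsum)
end

section
/- Let θ > 0 and R ∈ ℤ. There exists a constant C > 0 such that for every t ≥ 0, the sum over all integers q ≤ R of the square root of ∫_{A_q} e^{−θ|ξ|²t} dξ is at most C·(1 + t)^{−3/4}, where A_q = {ξ ∈ ℝ³ : (3/4)·2^q < |ξ| < (8/3)·2^q}. -/
open Finset

namespace GaussAux

lemma pow_rpow_comm {x : ℝ} (hx : 0 ≤ x) (n : ℕ) (p : ℝ) :
    (x ^ n) ^ p = (x ^ p) ^ n := by
  rw [← Real.rpow_natCast x n, ← Real.rpow_mul hx, mul_comm ((n : ℝ)) p,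
    Real.rpow_mul hx, Real.rpow_natCast]

lemma x_rpow (n : ℕ) : (((4:ℝ) ^ n)⁻¹) ^ ((3:ℝ)/4) = ((4:ℝ)⁻¹ ^ ((3:ℝ)/4)) ^ n := by
  rw [← inv_pow, pow_rpow_comm (by norm_num)]

lemma r0_pos : 0 < (4:ℝ)⁻¹ ^ ((3:ℝ)/4) := Real.rpow_pos_of_pos (by norm_num) _

lemma r0_lt_one : (4:ℝ)⁻¹ ^ ((3:ℝ)/4) < 1 :=
  Real.rpow_lt_one (by norm_num) (by norm_num) (by norm_num)

lemma weighted_bound (s : ℝ) (hs : 0 ≤ s) :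
    ∑' n : ℕ, (s * ((4:ℝ) ^ n)⁻¹) ^ ((3:ℝ)/4) * Real.exp (-(s * ((4:ℝ) ^ n)⁻¹)) ≤
      1 + 2 * (1 - Real.exp (-(1/2)))⁻¹ + (1 - (4:ℝ)⁻¹ ^ ((3:ℝ)/4))⁻¹ := by
  set r : ℝ := (4:ℝ)⁻¹ ^ ((3:ℝ)/4) with hrdef
  set ρ : ℝ := Real.exp (-(1/2)) with hρdef
  have hρ0 : 0 < ρ := Real.exp_pos _
  have hρ1 : ρ < 1 := by
    rw [hρdef]; exact Real.exp_lt_one_iff.mpr (by norm_num)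
  set f : ℕ → ℝ := fun n => (s * ((4:ℝ) ^ n)⁻¹) ^ ((3:ℝ)/4) * Real.exp (-(s * ((4:ℝ) ^ n)⁻¹))
    with hfdef
  have hx : ∀ n : ℕ, (0:ℝ) < ((4:ℝ) ^ n)⁻¹ := fun n => by positivity
  have hsx : ∀ n : ℕ, 0 ≤ s * ((4:ℝ) ^ n)⁻¹ := fun n => mul_nonneg hs (hx n).le
  have hf0 : ∀ n, 0 ≤ f n := fun n => by
    apply mul_nonneg (Real.rpow_nonneg (hsx n) _) (Real.exp_nonneg _)
  have hfb : ∀ n, f n ≤ s ^ ((3:ℝ)/4) * r ^ n := by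
    intro n
    have h1 : (s * ((4:ℝ) ^ n)⁻¹) ^ ((3:ℝ)/4)
        = s ^ ((3:ℝ)/4) * (((4:ℝ) ^ n)⁻¹) ^ ((3:ℝ)/4) := Real.mul_rpow hs (hx n).le
    have h2 : Real.exp (-(s * ((4:ℝ) ^ n)⁻¹)) ≤ 1 :=
      Real.exp_le_one_iff.mpr (by linarith [hsx n])
    calc f n ≤ (s * ((4:ℝ) ^ n)⁻¹) ^ ((3:ℝ)/4) * 1 :=
          mul_le_mul_of_nonneg_left h2 (Real.rpow_nonneg (hsx n) _)
      _ = s ^ ((3:ℝ)/4) * r ^ n := by rw [mul_one, h1, x_rpow]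
  have hgsum : Summable (fun n : ℕ => r ^ n) := summable_geometric_of_lt_one r0_pos.le r0_lt_one
  have hfs : Summable f :=
    Summable.of_nonneg_of_le hf0 hfb (hgsum.mul_left _)
  set N : ℕ := Nat.log 4 ⌊s⌋₊ + 1 with hNdef
  have hsN : s < (4:ℝ) ^ N := by
    have h1 : s < (⌊s⌋₊ : ℝ) + 1 := Nat.lt_floor_add_one s
    have h2 : ⌊s⌋₊ + 1 ≤ 4 ^ N := Nat.lt_pow_succ_log_self (by norm_num) ⌊s⌋₊
    have h3 : ((⌊s⌋₊ : ℝ) + 1) ≤ (4:ℝ) ^ N := by exact_mod_cast h2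
    linarith
  rw [← Summable.sum_add_tsum_nat_add N hfs]
  have htail : ∑' j, f (j + N) ≤ (1 - r)⁻¹ := by
    have hb : ∀ j, f (j + N) ≤ r ^ j := by
      intro j
      have hxle : s * ((4:ℝ) ^ (j + N))⁻¹ ≤ ((4:ℝ) ^ j)⁻¹ := by
        rw [pow_add, mul_inv, ← mul_assoc, mul_comm s, mul_assoc]
        refine mul_le_of_le_one_right (hx j).le ?_
        rw [← div_eq_mul_inv, div_le_one (by positivity)]
        exact hsN.le
      have h2 : Real.exp (-(s * ((4:ℝ) ^ (j + N))⁻¹)) ≤ 1 :=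
        Real.exp_le_one_iff.mpr (by linarith [hsx (j + N)])
      calc f (j + N) ≤ (s * ((4:ℝ) ^ (j + N))⁻¹) ^ ((3:ℝ)/4) * 1 :=
            mul_le_mul_of_nonneg_left h2 (Real.rpow_nonneg (hsx _) _)
        _ = (s * ((4:ℝ) ^ (j + N))⁻¹) ^ ((3:ℝ)/4) := mul_one _
        _ ≤ (((4:ℝ) ^ j)⁻¹) ^ ((3:ℝ)/4) :=
            Real.rpow_le_rpow (hsx _) hxle (by norm_num)
        _ = r ^ j := x_rpow j
    calc ∑' j, f (j + N) ≤ ∑' j : ℕ, r ^ j :=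
          Summable.tsum_le_tsum hb ((summable_nat_add_iff N).2 hfs) hgsum
      _ = (1 - r)⁻¹ := tsum_geometric_of_lt_one r0_pos.le r0_lt_one
  have hhead : ∑ i ∈ range N, f i ≤ 1 + 2 * (1 - ρ)⁻¹ := by
    rcases eq_or_ne ⌊s⌋₊ 0 with hz | hz
    · have hN1 : N = 1 := by rw [hNdef, hz, Nat.log_zero_right]
      have hs1 : s < 1 := by
        have := Nat.lt_floor_add_one s; rw [hz] at this; push_cast at this; linarith
      have hf0le : f 0 ≤ 1 := by
        have h1 : (s * ((4:ℝ) ^ 0)⁻¹) = s := by norm_num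
        have h2 : Real.exp (-(s * ((4:ℝ) ^ 0)⁻¹)) ≤ 1 :=
          Real.exp_le_one_iff.mpr (by rw [h1]; linarith)
        have h3 : (s * ((4:ℝ) ^ 0)⁻¹) ^ ((3:ℝ)/4) ≤ 1 := by
          rw [h1]; exact Real.rpow_le_one hs hs1.le (by norm_num)
        calc f 0 ≤ 1 * 1 := mul_le_mul h3 h2 (Real.exp_nonneg _) zero_le_one
          _ = 1 := by norm_num
      have hsum1 : ∑ i ∈ range N, f i = f 0 := by rw [hN1, sum_range_one]
      rw [hsum1]
      have h2 : (0:ℝ) ≤ 2 * (1 - ρ)⁻¹ := by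
        have : (0:ℝ) < 1 - ρ := by linarith
        positivity
      linarith
    · have hs1 : 1 ≤ s := by
        have : 0 < ⌊s⌋₊ := Nat.pos_of_ne_zero hz
        exact (Nat.one_le_floor_iff _).mp this
      have hlow : ∀ i, i < N → (4:ℝ) ^ (N - 1 - i) ≤ s * ((4:ℝ) ^ i)⁻¹ := by
        intro i hi
        have hplog : (4:ℝ) ^ (N - 1) ≤ s := by
          have h1 : (4:ℕ) ^ Nat.log 4 ⌊s⌋₊ ≤ ⌊s⌋₊ := Nat.pow_log_le_self 4 hz
          have h2 : ((4:ℕ) ^ Nat.log 4 ⌊s⌋₊ : ℝ) ≤ (⌊s⌋₊ : ℝ) := by exact_mod_cast h1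
          have h3 : (⌊s⌋₊ : ℝ) ≤ s := Nat.floor_le hs
          have h4 : N - 1 = Nat.log 4 ⌊s⌋₊ := by omega
          rw [h4]; push_cast at h2; linarith
        rw [← div_eq_mul_inv, le_div_iff₀ (by positivity), ← pow_add]
        have h5 : N - 1 - i + i = N - 1 := by omega
        rw [h5]; exact hplog
      have hterm : ∀ i, i < N → f i ≤ 2 * ρ ^ (N - 1 - i + 1) := by
        intro i hi
        set y : ℝ := s * ((4:ℝ) ^ i)⁻¹ with hydef
        have hy1 : 1 ≤ y := le_trans (by exact_mod_cast one_le_pow₀ (by norm_num : (1:ℝ) ≤ 4)) (hlow i hi)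
        have hy34 : y ^ ((3:ℝ)/4) ≤ y := by
          calc y ^ ((3:ℝ)/4) ≤ y ^ (1:ℝ) :=
                Real.rpow_le_rpow_of_exponent_le hy1 (by norm_num)
            _ = y := Real.rpow_one y
        have hy2 : y ≤ 2 * Real.exp (y/2) := by
          have := Real.add_one_le_exp (y/2)
          have h2 := Real.exp_pos (y/2)
          linarith
        have hf1 : f i ≤ 2 * Real.exp (-(y/2)) := by
          have : f i ≤ y * Real.exp (-y) :=
            mul_le_mul_of_nonneg_right hy34 (Real.exp_nonneg _)
          have h3 : y * Real.exp (-y) ≤ 2 * Real.exp (y/2) * Real.exp (-y) :=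
            mul_le_mul_of_nonneg_right hy2 (Real.exp_nonneg _)
          have h4 : 2 * Real.exp (y/2) * Real.exp (-y) = 2 * Real.exp (-(y/2)) := by
            rw [mul_assoc, ← Real.exp_add]; ring_nf
          linarith
        have hk : ((N - 1 - i + 1 : ℕ) : ℝ) ≤ (4:ℝ) ^ (N - 1 - i) := by
          have h1 : (N - 1 - i) + 1 ≤ 4 ^ (N - 1 - i) := Nat.lt_pow_self (by norm_num : 1 < 4)
          exact_mod_cast h1
        have h6 : Real.exp (-(y/2)) ≤ Real.exp (-(((N - 1 - i + 1 : ℕ) : ℝ)/2)) := by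
          apply Real.exp_le_exp.mpr
          have := hlow i hi
          have := hk
          rw [hydef] at *
          linarith
        have h7 : Real.exp (-(((N - 1 - i + 1 : ℕ) : ℝ)/2)) = ρ ^ (N - 1 - i + 1) := by
          rw [hρdef, ← Real.exp_nat_mul]
          congr 1; push_cast; ring
        calc f i ≤ 2 * Real.exp (-(y/2)) := hf1
          _ ≤ 2 * Real.exp (-(((N - 1 - i + 1 : ℕ) : ℝ)/2)) := by linarith
          _ = 2 * ρ ^ (N - 1 - i + 1) := by rw [h7]
      calc ∑ i ∈ range N, f i ≤ ∑ i ∈ range N, 2 * ρ ^ (N - 1 - i + 1) :=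
            Finset.sum_le_sum (fun i hi => hterm i (Finset.mem_range.mp hi))
        _ = ∑ j ∈ range N, 2 * ρ ^ (j + 1) := sum_range_reflect (fun j => 2 * ρ ^ (j + 1)) N
        _ ≤ ∑ j ∈ range N, 2 * ρ ^ j := by
            apply Finset.sum_le_sum
            intro j _
            have : ρ ^ (j+1) ≤ ρ ^ j := pow_le_pow_of_le_one hρ0.le hρ1.le (by omega)
            linarith
        _ = 2 * ∑ j ∈ range N, ρ ^ j := by rw [Finset.mul_sum]
        _ ≤ 2 * (1 - ρ)⁻¹ := by
            have h1 : ∑ j ∈ range N, ρ ^ j ≤ ∑' j : ℕ, ρ ^ j :=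
              Summable.sum_le_tsum (range N) (fun j _ => by positivity)
                (summable_geometric_of_lt_one hρ0.le hρ1)
            rw [tsum_geometric_of_lt_one hρ0.le hρ1] at h1
            linarith
        _ ≤ 1 + 2 * (1 - ρ)⁻¹ := by linarith
  linarith


lemma one_add_rpow_le (s : ℝ) (hs : 0 ≤ s) :
    (1 + s) ^ ((3:ℝ)/4) ≤ 1 + s ^ ((3:ℝ)/4) := by
  have h := NNReal.rpow_add_le_add_rpow (1 : NNReal) s.toNNReal
    (p := (3:ℝ)/4) (by norm_num) (by norm_num)
  have h2 := (NNReal.coe_le_coe).2 h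
  rw [NNReal.coe_add, NNReal.coe_rpow, NNReal.coe_rpow, NNReal.coe_rpow, NNReal.coe_add,
    NNReal.coe_one, Real.coe_toNNReal s hs] at h2
  simpa using h2

lemma unweighted_bound (s : ℝ) (hs : 0 ≤ s) :
    Summable (fun n : ℕ => (((4:ℝ) ^ n)⁻¹) ^ ((3:ℝ)/4) * Real.exp (-(s * ((4:ℝ) ^ n)⁻¹))) ∧
    ∑' n : ℕ, (((4:ℝ) ^ n)⁻¹) ^ ((3:ℝ)/4) * Real.exp (-(s * ((4:ℝ) ^ n)⁻¹)) ≤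
      (1 - (4:ℝ)⁻¹ ^ ((3:ℝ)/4))⁻¹ := by
  set r : ℝ := (4:ℝ)⁻¹ ^ ((3:ℝ)/4) with hrdef
  have hx : ∀ n : ℕ, (0:ℝ) < ((4:ℝ) ^ n)⁻¹ := fun n => by positivity
  have hb : ∀ n : ℕ, (((4:ℝ) ^ n)⁻¹) ^ ((3:ℝ)/4) * Real.exp (-(s * ((4:ℝ) ^ n)⁻¹)) ≤ r ^ n := by
    intro n
    have h2 : Real.exp (-(s * ((4:ℝ) ^ n)⁻¹)) ≤ 1 :=
      Real.exp_le_one_iff.mpr (by nlinarith [mul_nonneg hs (hx n).le])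
    calc (((4:ℝ) ^ n)⁻¹) ^ ((3:ℝ)/4) * Real.exp (-(s * ((4:ℝ) ^ n)⁻¹))
        ≤ (((4:ℝ) ^ n)⁻¹) ^ ((3:ℝ)/4) * 1 :=
          mul_le_mul_of_nonneg_left h2 (Real.rpow_nonneg (hx n).le _)
      _ = r ^ n := by rw [mul_one, x_rpow]
  have h0 : ∀ n : ℕ, 0 ≤ (((4:ℝ) ^ n)⁻¹) ^ ((3:ℝ)/4) * Real.exp (-(s * ((4:ℝ) ^ n)⁻¹)) :=
    fun n => mul_nonneg (Real.rpow_nonneg (hx n).le _) (Real.exp_nonneg _)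
  have hgsum : Summable (fun n : ℕ => r ^ n) := summable_geometric_of_lt_one r0_pos.le r0_lt_one
  have hsum : Summable (fun n : ℕ => (((4:ℝ) ^ n)⁻¹) ^ ((3:ℝ)/4) *
      Real.exp (-(s * ((4:ℝ) ^ n)⁻¹))) := Summable.of_nonneg_of_le h0 hb hgsum
  refine ⟨hsum, ?_⟩
  calc ∑' n : ℕ, (((4:ℝ) ^ n)⁻¹) ^ ((3:ℝ)/4) * Real.exp (-(s * ((4:ℝ) ^ n)⁻¹))
      ≤ ∑' n : ℕ, r ^ n := Summable.tsum_le_tsum hb hsum hgsum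
    _ = (1 - r)⁻¹ := tsum_geometric_of_lt_one r0_pos.le r0_lt_one

lemma dyadic_decay (s : ℝ) (hs : 0 ≤ s) :
    ∑' n : ℕ, (((4:ℝ) ^ n)⁻¹) ^ ((3:ℝ)/4) * Real.exp (-(s * ((4:ℝ) ^ n)⁻¹)) ≤
      ((1 - (4:ℝ)⁻¹ ^ ((3:ℝ)/4))⁻¹ + (1 + 2 * (1 - Real.exp (-(1/2)))⁻¹ +
        (1 - (4:ℝ)⁻¹ ^ ((3:ℝ)/4))⁻¹)) * (1 + s) ^ (-(3:ℝ)/4) := by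
  obtain ⟨hsum, hA⟩ := unweighted_bound s hs
  set T : ℝ := ∑' n : ℕ, (((4:ℝ) ^ n)⁻¹) ^ ((3:ℝ)/4) * Real.exp (-(s * ((4:ℝ) ^ n)⁻¹)) with hT
  have hx : ∀ n : ℕ, (0:ℝ) < ((4:ℝ) ^ n)⁻¹ := fun n => by positivity
  have hT0 : 0 ≤ T := tsum_nonneg (fun n =>
    mul_nonneg (Real.rpow_nonneg (hx n).le _) (Real.exp_nonneg _))
  have hsT : s ^ ((3:ℝ)/4) * T ≤ 1 + 2 * (1 - Real.exp (-(1/2)))⁻¹ +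
      (1 - (4:ℝ)⁻¹ ^ ((3:ℝ)/4))⁻¹ := by
    have heq : s ^ ((3:ℝ)/4) * T = ∑' n : ℕ,
        (s * ((4:ℝ) ^ n)⁻¹) ^ ((3:ℝ)/4) * Real.exp (-(s * ((4:ℝ) ^ n)⁻¹)) := by
      rw [hT, ← tsum_mul_left]
      congr 1; funext n
      rw [Real.mul_rpow hs (hx n).le]; ring
    rw [heq]; exact weighted_bound s hs
  set Ctot : ℝ := (1 - (4:ℝ)⁻¹ ^ ((3:ℝ)/4))⁻¹ + (1 + 2 * (1 - Real.exp (-(1/2)))⁻¹ +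
      (1 - (4:ℝ)⁻¹ ^ ((3:ℝ)/4))⁻¹) with hCtot
  have hkey : (1 + s) ^ ((3:ℝ)/4) * T ≤ Ctot := by
    have h1 : (1 + s) ^ ((3:ℝ)/4) * T ≤ (1 + s ^ ((3:ℝ)/4)) * T :=
      mul_le_mul_of_nonneg_right (one_add_rpow_le s hs) hT0
    have h2 : (1 + s ^ ((3:ℝ)/4)) * T = T + s ^ ((3:ℝ)/4) * T := by ring
    rw [hCtot]; linarith
  have hpos : (0:ℝ) < (1 + s) ^ ((3:ℝ)/4) := Real.rpow_pos_of_pos (by linarith) _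
  have hneg : (1 + s) ^ (-(3:ℝ)/4) = ((1 + s) ^ ((3:ℝ)/4))⁻¹ := by
    rw [show -(3:ℝ)/4 = -((3:ℝ)/4) by ring, Real.rpow_neg (by linarith)]
  rw [hneg, ← div_eq_mul_inv, le_div_iff₀ hpos]
  linarith [hkey]


lemma sqrt_exp (z : ℝ) : Real.sqrt (Real.exp z) = Real.exp (z/2) := by
  have h : Real.exp (z/2) ^ 2 = Real.exp z := by
    rw [← Real.exp_nat_mul]; congr 1; push_cast; ring
  rw [← h, Real.sqrt_sq (Real.exp_nonneg _)]

open MeasureTheory in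
lemma sqrt_integral_le (θ t : ℝ) (hθ : 0 < θ) (ht : 0 ≤ t) (q : ℤ) :
    Real.sqrt (∫ ξ in {ξ : EuclideanSpace ℝ (Fin 3) |
        (3 / 4 : ℝ) * 2 ^ q < ‖ξ‖ ∧ ‖ξ‖ < (8 / 3 : ℝ) * 2 ^ q},
      Real.exp (-θ * ‖ξ‖ ^ 2 * t)) ≤
    Real.sqrt (((8 / 3 : ℝ) * 2 ^ q) ^ 3 * (Real.sqrt Real.pi ^ 3 / Real.Gamma (3 / 2 + 1))) *
      Real.exp (-(θ * (9/16) * ((2:ℝ) ^ q) ^ 2 * t) / 2) := by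
  have h2q : (0:ℝ) < (2:ℝ) ^ q := zpow_pos (by norm_num) q
  set r : ℝ := (8 / 3 : ℝ) * 2 ^ q with hrdef
  have hr : 0 < r := by positivity
  set S : Set (EuclideanSpace ℝ (Fin 3)) :=
    {ξ | (3 / 4 : ℝ) * 2 ^ q < ‖ξ‖ ∧ ‖ξ‖ < (8 / 3 : ℝ) * 2 ^ q} with hSdef
  have hmeas : MeasurableSet S := by
    have : S = (fun ξ : EuclideanSpace ℝ (Fin 3) => ‖ξ‖) ⁻¹'
        (Set.Ioo ((3 / 4 : ℝ) * 2 ^ q) ((8 / 3 : ℝ) * 2 ^ q)) := rfl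
    rw [this]
    exact measurable_norm measurableSet_Ioo
  have hsub : S ⊆ Metric.ball (0 : EuclideanSpace ℝ (Fin 3)) r :=
    fun ξ hξ => mem_ball_zero_iff.mpr hξ.2
  have hfin : volume S < ⊤ := lt_of_le_of_lt (measure_mono hsub) measure_ball_lt_top
  set E : ℝ := Real.exp (-(θ * (9/16) * ((2:ℝ) ^ q) ^ 2 * t)) with hEdef
  have hC : ∀ ξ ∈ S, ‖Real.exp (-θ * ‖ξ‖ ^ 2 * t)‖ ≤ E := by
    intro ξ hξ
    rw [Real.norm_eq_abs, abs_of_pos (Real.exp_pos _)]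
    apply Real.exp_le_exp.mpr
    have h1 : (3 / 4 : ℝ) * 2 ^ q < ‖ξ‖ := hξ.1
    have h2 : (0:ℝ) ≤ θ * t := mul_nonneg hθ.le ht
    have h3 : ((3 / 4 : ℝ) * 2 ^ q) ^ 2 ≤ ‖ξ‖ ^ 2 := by
      apply pow_le_pow_left₀ (by positivity) h1.le
    nlinarith [mul_nonneg h2 (sub_nonneg.mpr h3)]
  have hint : (∫ ξ in S, Real.exp (-θ * ‖ξ‖ ^ 2 * t)) ≤ E * (volume S).toReal := by
    have h := norm_setIntegral_le_of_norm_le_const hfin hC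
    exact le_trans (le_abs_self _) h
  set D : ℝ := Real.sqrt Real.pi ^ 3 / Real.Gamma (3 / 2 + 1) with hDdef
  have hD : 0 < D := by
    apply div_pos (by positivity) (Real.Gamma_pos_of_pos (by norm_num))
  have hvol : (volume S).toReal ≤ r ^ 3 * D := by
    have hv := EuclideanSpace.volume_ball (Fin 3) (0 : EuclideanSpace ℝ (Fin 3)) r
    simp only [Fintype.card_fin] at hv
    have hmono : volume S ≤ volume (Metric.ball (0 : EuclideanSpace ℝ (Fin 3)) r) :=
      measure_mono hsub
    rw [hv] at hmono
    have hne : (ENNReal.ofReal r) ^ 3 * ENNReal.ofReal D ≠ ⊤ :=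
      ENNReal.mul_ne_top (by simp [ENNReal.pow_ne_top]) ENNReal.ofReal_ne_top
    have h2 := ENNReal.toReal_mono hne hmono
    rwa [ENNReal.toReal_mul, ENNReal.toReal_pow, ENNReal.toReal_ofReal hr.le,
      ENNReal.toReal_ofReal hD.le] at h2
  have hEpos : 0 < E := Real.exp_pos _
  calc Real.sqrt (∫ ξ in S, Real.exp (-θ * ‖ξ‖ ^ 2 * t))
      ≤ Real.sqrt ((r ^ 3 * D) * E) := by
        apply Real.sqrt_le_sqrt
        calc (∫ ξ in S, Real.exp (-θ * ‖ξ‖ ^ 2 * t)) ≤ E * (volume S).toReal := hint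
          _ ≤ E * (r ^ 3 * D) := mul_le_mul_of_nonneg_left hvol hEpos.le
          _ = (r ^ 3 * D) * E := mul_comm _ _
    _ = Real.sqrt (r ^ 3 * D) * Real.exp (-(θ * (9/16) * ((2:ℝ) ^ q) ^ 2 * t) / 2) := by
        rw [Real.sqrt_mul (by positivity), hEdef, sqrt_exp]

lemma decay_compare (c t : ℝ) (hc : 0 < c) (ht : 0 ≤ t) :
    (1 + c * t) ^ (-(3:ℝ)/4) ≤ (max 1 c⁻¹) ^ ((3:ℝ)/4) * (1 + t) ^ (-(3:ℝ)/4) := by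
  set K : ℝ := max 1 c⁻¹ with hKdef
  have hK1 : (1:ℝ) ≤ K := le_max_left _ _
  have hK2 : c⁻¹ ≤ K := le_max_right _ _
  have h1 : 1 + t ≤ K * (1 + c * t) := by
    have hct : 0 ≤ c * t := mul_nonneg hc.le ht
    have h2 : t = c⁻¹ * (c * t) := by field_simp
    have h3 : c⁻¹ * (c * t) ≤ K * (c * t) := mul_le_mul_of_nonneg_right hK2 hct
    nlinarith
  have ha : (0:ℝ) < (1 + c * t) ^ ((3:ℝ)/4) :=
    Real.rpow_pos_of_pos (by nlinarith [mul_nonneg hc.le ht]) _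
  have hb : (0:ℝ) < (1 + t) ^ ((3:ℝ)/4) := Real.rpow_pos_of_pos (by linarith) _
  have hrp : (1 + t) ^ ((3:ℝ)/4) ≤ K ^ ((3:ℝ)/4) * (1 + c * t) ^ ((3:ℝ)/4) := by
    rw [← Real.mul_rpow (by linarith) (by nlinarith [mul_nonneg hc.le ht])]
    exact Real.rpow_le_rpow (by linarith) h1 (by norm_num)
  have hKp : (0:ℝ) < K ^ ((3:ℝ)/4) := Real.rpow_pos_of_pos (by linarith) _
  have hna : (1 + c * t) ^ (-(3:ℝ)/4) = ((1 + c * t) ^ ((3:ℝ)/4))⁻¹ := by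
    rw [show -(3:ℝ)/4 = -((3:ℝ)/4) by ring,
      Real.rpow_neg (by nlinarith [mul_nonneg hc.le ht])]
  have hnb : (1 + t) ^ (-(3:ℝ)/4) = ((1 + t) ^ ((3:ℝ)/4))⁻¹ := by
    rw [show -(3:ℝ)/4 = -((3:ℝ)/4) by ring, Real.rpow_neg (by linarith)]
  rw [hna, hnb, ← div_eq_mul_inv, le_div_iff₀ hb, inv_mul_eq_div, div_le_iff₀ ha]
  calc (1 + t) ^ ((3:ℝ)/4) ≤ K ^ ((3:ℝ)/4) * (1 + c * t) ^ ((3:ℝ)/4) := hrp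
    _ = K ^ ((3:ℝ)/4) * (1 + c * t) ^ ((3:ℝ)/4) := rfl


lemma four_rpow_eq : (4:ℝ)⁻¹ ^ ((3:ℝ)/4) = Real.sqrt (8:ℝ)⁻¹ := by
  have e1 : (2:ℝ) ^ (-2:ℝ) = (4:ℝ)⁻¹ := by
    rw [show (-2:ℝ) = ((-2:ℤ):ℝ) by norm_num, Real.rpow_intCast]; norm_num
  have e2 : (2:ℝ) ^ (-3:ℝ) = (8:ℝ)⁻¹ := by
    rw [show (-3:ℝ) = ((-3:ℤ):ℝ) by norm_num, Real.rpow_intCast]; norm_num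
  rw [Real.sqrt_eq_rpow, ← e1, ← e2, ← Real.rpow_mul (by norm_num), ← Real.rpow_mul (by norm_num)]
  norm_num

lemma sqrt_eight_pow (n : ℕ) :
    Real.sqrt (((8:ℝ) ^ n)⁻¹) = (((4:ℝ) ^ n)⁻¹) ^ ((3:ℝ)/4) := by
  rw [x_rpow, four_rpow_eq, ← inv_pow, Real.sqrt_eq_rpow, Real.sqrt_eq_rpow,
    pow_rpow_comm (by norm_num)]

end GaussAux


open MeasureTheory in
/-- Quantitative heart of Lemma 3.4: for `θ > 0` and `R ∈ ℤ` there is `C > 0`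
such that for all `t ≥ 0`,
`∑_{q ≤ R} (∫_{A_q} e^{−θ|ξ|²t} dξ)^{1/2} ≤ C (1+t)^{−3/4}`,
where `A_q = {ξ ∈ ℝ³ : (3/4)2^q < |ξ| < (8/3)2^q}`. -/
theorem sum_sqrt_gaussian_annulus_decay (θ : ℝ) (hθ : 0 < θ) (R : ℤ) :
    ∃ C : ℝ, 0 < C ∧ ∀ t : ℝ, 0 ≤ t →
      Summable (fun q : {q : ℤ // q ≤ R} =>
        Real.sqrt (∫ ξ in {ξ : EuclideanSpace ℝ (Fin 3) |
            (3 / 4 : ℝ) * 2 ^ (q : ℤ) < ‖ξ‖ ∧ ‖ξ‖ < (8 / 3 : ℝ) * 2 ^ (q : ℤ)},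
          Real.exp (-θ * ‖ξ‖ ^ 2 * t))) ∧
      (∑' q : {q : ℤ // q ≤ R},
        Real.sqrt (∫ ξ in {ξ : EuclideanSpace ℝ (Fin 3) |
            (3 / 4 : ℝ) * 2 ^ (q : ℤ) < ‖ξ‖ ∧ ‖ξ‖ < (8 / 3 : ℝ) * 2 ^ (q : ℤ)},
          Real.exp (-θ * ‖ξ‖ ^ 2 * t)))
        ≤ C * (1 + t) ^ (-(3 : ℝ) / 4) := by
  classical
  have h2R : (0:ℝ) < (2:ℝ) ^ R := zpow_pos (by norm_num) R
  set c : ℝ := θ * (9/32) * ((2:ℝ) ^ R) ^ 2 with hcdef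
  have hc : 0 < c := by positivity
  set D : ℝ := Real.sqrt Real.pi ^ 3 / Real.Gamma (3 / 2 + 1) with hDdef
  have hD : 0 < D := div_pos (by positivity) (Real.Gamma_pos_of_pos (by norm_num))
  set M : ℝ := Real.sqrt (((8 / 3 : ℝ) * 2 ^ R) ^ 3 * D) with hMdef
  have hM : 0 < M := Real.sqrt_pos.mpr (by positivity)
  set K : ℝ := (max 1 c⁻¹) ^ ((3:ℝ)/4) with hKdef
  have hK : 0 < K := Real.rpow_pos_of_pos (lt_of_lt_of_le one_pos (le_max_left _ _)) _
  set Cd : ℝ := (1 - (4:ℝ)⁻¹ ^ ((3:ℝ)/4))⁻¹ + (1 + 2 * (1 - Real.exp (-(1/2)))⁻¹ +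
      (1 - (4:ℝ)⁻¹ ^ ((3:ℝ)/4))⁻¹) with hCddef
  have hr1 : (0:ℝ) < 1 - (4:ℝ)⁻¹ ^ ((3:ℝ)/4) := by have := GaussAux.r0_lt_one; linarith
  have hρ1 : (0:ℝ) < 1 - Real.exp (-(1/2)) := by
    have : Real.exp (-(1/2:ℝ)) < 1 := Real.exp_lt_one_iff.mpr (by norm_num)
    linarith
  have hCd : 0 < Cd := by
    have i1 := inv_pos.mpr hr1
    have i2 := inv_pos.mpr hρ1
    rw [hCddef]; linarith
  refine ⟨M * Cd * K, by positivity, ?_⟩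
  intro t ht
  set s : ℝ := c * t with hsdef
  have hs : 0 ≤ s := mul_nonneg hc.le ht
  set g : ℕ → ℝ := fun n => (((4:ℝ) ^ n)⁻¹) ^ ((3:ℝ)/4) * Real.exp (-(s * ((4:ℝ) ^ n)⁻¹))
    with hgdef
  obtain ⟨hgsum, hgle⟩ := GaussAux.unweighted_bound s hs
  have hgsum' : Summable g := hgsum
  let e : ℕ ≃ {q : ℤ // q ≤ R} :=
    { toFun := fun n => ⟨R - n, by omega⟩
      invFun := fun q => (R - q.1).toNat
      left_inv := fun n => by show (R - (R - (n:ℤ))).toNat = n; omega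
      right_inv := fun q => Subtype.ext (by have hq := q.2; simp; omega) }
  set F : {q : ℤ // q ≤ R} → ℝ := fun q =>
      Real.sqrt (∫ ξ in {ξ : EuclideanSpace ℝ (Fin 3) |
          (3 / 4 : ℝ) * 2 ^ (q : ℤ) < ‖ξ‖ ∧ ‖ξ‖ < (8 / 3 : ℝ) * 2 ^ (q : ℤ)},
        Real.exp (-θ * ‖ξ‖ ^ 2 * t)) with hFdef
  have hterm : ∀ n : ℕ, F (e n) ≤ M * g n := by
    intro n
    have h := GaussAux.sqrt_integral_le θ t hθ ht (R - n)
    have h2pow : (2:ℝ) ^ (R - (n:ℤ)) = (2:ℝ) ^ R * ((2:ℝ) ^ (n:ℕ))⁻¹ := by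
      rw [zpow_sub₀ (by norm_num : (2:ℝ) ≠ 0), zpow_natCast, div_eq_mul_inv]
    have h8 : ((2:ℝ) ^ (n:ℕ)) ^ 3 = (8:ℝ) ^ n := by
      rw [← pow_mul, mul_comm n 3, pow_mul]; norm_num
    have h4 : ((2:ℝ) ^ (n:ℕ)) ^ 2 = (4:ℝ) ^ n := by
      rw [← pow_mul, mul_comm n 2, pow_mul]; norm_num
    have hcube : ((8 / 3 : ℝ) * 2 ^ (R - (n:ℤ))) ^ 3 * D
        = (((8 / 3 : ℝ) * 2 ^ R) ^ 3 * D) * ((8:ℝ) ^ n)⁻¹ := by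
      rw [h2pow, mul_pow, mul_pow, inv_pow, h8]
      ring
    have hsq : ((2:ℝ) ^ (R - (n:ℤ))) ^ 2 = ((2:ℝ) ^ R) ^ 2 * ((4:ℝ) ^ n)⁻¹ := by
      rw [h2pow, mul_pow, inv_pow, h4]
    have hexp : -(θ * (9/16) * (((2:ℝ) ^ (R - (n:ℤ))) ^ 2) * t) / 2
        = -(s * ((4:ℝ) ^ n)⁻¹) := by
      rw [hsq, hsdef, hcdef]; ring
    have hsqrt : Real.sqrt (((8 / 3 : ℝ) * 2 ^ (R - (n:ℤ))) ^ 3 * D)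
        = M * (((4:ℝ) ^ n)⁻¹) ^ ((3:ℝ)/4) := by
      rw [hcube, Real.sqrt_mul (by positivity), ← hMdef, GaussAux.sqrt_eight_pow]
    calc F (e n) ≤ Real.sqrt (((8 / 3 : ℝ) * 2 ^ (R - (n:ℤ))) ^ 3 *
          (Real.sqrt Real.pi ^ 3 / Real.Gamma (3 / 2 + 1))) *
          Real.exp (-(θ * (9/16) * (((2:ℝ) ^ (R - (n:ℤ))) ^ 2) * t) / 2) := h
      _ = M * g n := by
          rw [← hDdef, hsqrt, hexp, hgdef, mul_assoc]
  have hFnonneg : ∀ n : ℕ, 0 ≤ F (e n) := fun n => Real.sqrt_nonneg _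
  have hMg : Summable (fun n : ℕ => M * g n) := hgsum'.mul_left M
  have hFe : Summable (fun n : ℕ => F (e n)) :=
    Summable.of_nonneg_of_le hFnonneg hterm hMg
  have hFsum : Summable F := e.summable_iff.mp hFe
  refine ⟨hFsum, ?_⟩
  have htsum : ∑' q : {q : ℤ // q ≤ R}, F q = ∑' n : ℕ, F (e n) := (e.tsum_eq F).symm
  have hT : ∑' n : ℕ, F (e n) ≤ M * ∑' n : ℕ, g n := by
    calc ∑' n : ℕ, F (e n) ≤ ∑' n : ℕ, M * g n := Summable.tsum_le_tsum hterm hFe hMg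
      _ = M * ∑' n : ℕ, g n := tsum_mul_left
  have hdy : ∑' n : ℕ, g n ≤ Cd * (1 + s) ^ (-(3:ℝ)/4) := GaussAux.dyadic_decay s hs
  have hcmp : (1 + s) ^ (-(3:ℝ)/4) ≤ K * (1 + t) ^ (-(3:ℝ)/4) := GaussAux.decay_compare c t hc ht
  have hfinal : ∑' q : {q : ℤ // q ≤ R}, F q ≤ M * Cd * K * (1 + t) ^ (-(3:ℝ)/4) := by
    rw [htsum]
    calc ∑' n : ℕ, F (e n) ≤ M * ∑' n : ℕ, g n := hT
      _ ≤ M * (Cd * (1 + s) ^ (-(3:ℝ)/4)) := by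
          apply mul_le_mul_of_nonneg_left hdy hM.le
      _ ≤ M * (Cd * (K * (1 + t) ^ (-(3:ℝ)/4))) := by
          apply mul_le_mul_of_nonneg_left _ hM.le
          exact mul_le_mul_of_nonneg_left hcmp hCd.le
      _ = M * Cd * K * (1 + t) ^ (-(3:ℝ)/4) := by ring
  exact hfinal
end

section
/- Let v : ℝ × ℝ³ → ℝ³ and U : ℝ × ℝ³ → Matrix (Fin 3) (Fin 3) ℝ be differentiable, and suppose that at every point (t, x) and for all indices i, j: ∂ₜU^{ij} + Σ_k v^k · ∂_{x_k}U^{ij} = Σ_k (∂_{x_k}v^i) · U^{kj}. Then at every point (t, x): ∂ₜ(det U) + Σ_k v^k · ∂_{x_k}(det U) = (Σ_k ∂_{x_k}v^k) · det U. -/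
/-- Time partial derivative of a function of `(t, x) ∈ ℝ × ℝ³`. -/
noncomputable def partialT (f : ℝ × (Fin 3 → ℝ) → ℝ) (p : ℝ × (Fin 3 → ℝ)) : ℝ :=
  deriv (fun τ : ℝ => f (τ, p.2)) p.1

/-- Spatial partial derivative `∂_{x_k}` of a function of `(t, x) ∈ ℝ × ℝ³`. -/
noncomputable def partialX (k : Fin 3) (f : ℝ × (Fin 3 → ℝ) → ℝ)
    (p : ℝ × (Fin 3 → ℝ)) : ℝ :=
  deriv (fun s : ℝ => f (p.1, p.2 + s • (Pi.single k 1 : Fin 3 → ℝ))) 0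

open Matrix Finset in
private lemma curve_hasDerivAt (p : ℝ × (Fin 3 → ℝ)) (w : Fin 3 → ℝ) :
    HasDerivAt (fun s : ℝ => ((p.1 + s, p.2 + s • w) : ℝ × (Fin 3 → ℝ)))
      ((1 : ℝ), w) 0 := by
  have h1 : HasDerivAt (fun s : ℝ => p.1 + s) 1 0 := by
    simpa using (hasDerivAt_id (0 : ℝ)).const_add p.1
  have h2 : HasDerivAt (fun s : ℝ => p.2 + s • w) w 0 := by
    simpa using ((hasDerivAt_id (0 : ℝ)).smul_const w).const_add p.2
  exact h1.prodMk h2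

/-- The operator `∂ₜ + v·∇` is the directional derivative along `(1, w)`. -/
private lemma dirDeriv_eq (f : ℝ × (Fin 3 → ℝ) → ℝ) (hf : Differentiable ℝ f)
    (p : ℝ × (Fin 3 → ℝ)) (w : Fin 3 → ℝ) :
    deriv (fun s : ℝ => f (p.1 + s, p.2 + s • w)) 0
      = partialT f p + ∑ k, w k * partialX k f p := by
  classical
  have hp0 : ((p.1 + (0:ℝ), p.2 + (0:ℝ) • w) : ℝ × (Fin 3 → ℝ)) = p := by simp
  -- derivative along the curve
  have hcomp : HasDerivAt (fun s : ℝ => f (p.1 + s, p.2 + s • w))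
      (fderiv ℝ f p ((1 : ℝ), w)) 0 := by
    have := (hf _).hasFDerivAt.comp_hasDerivAt 0 (curve_hasDerivAt p w)
    rwa [hp0] at this
  -- partialT as a directional derivative
  have hT : partialT f p = fderiv ℝ f p ((1 : ℝ), (0 : Fin 3 → ℝ)) := by
    have hc : HasDerivAt (fun τ : ℝ => ((τ, p.2) : ℝ × (Fin 3 → ℝ)))
        ((1 : ℝ), (0 : Fin 3 → ℝ)) p.1 :=
      (hasDerivAt_id p.1).prodMk (hasDerivAt_const p.1 p.2)
    have := (hf _).hasFDerivAt.comp_hasDerivAt p.1 hc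
    rw [show ((p.1, p.2) : ℝ × (Fin 3 → ℝ)) = p from rfl] at this
    have h := this.deriv
    simp only [Function.comp_def] at h
    simp only [partialT]
    exact h
  -- partialX as a directional derivative
  have hX : ∀ k, partialX k f p
      = fderiv ℝ f p ((0 : ℝ), (Pi.single k 1 : Fin 3 → ℝ)) := by
    intro k
    have hc : HasDerivAt
        (fun s : ℝ => ((p.1, p.2 + s • (Pi.single k 1 : Fin 3 → ℝ)) : ℝ × (Fin 3 → ℝ)))
        ((0 : ℝ), (Pi.single k 1 : Fin 3 → ℝ)) 0 := by
      refine (hasDerivAt_const 0 p.1).prodMk ?_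
      simpa using ((hasDerivAt_id (0 : ℝ)).smul_const
        (Pi.single k 1 : Fin 3 → ℝ)).const_add p.2
    have := (hf _).hasFDerivAt.comp_hasDerivAt 0 hc
    rw [show ((p.1, p.2 + (0:ℝ) • (Pi.single k 1 : Fin 3 → ℝ)) : ℝ × (Fin 3 → ℝ)) = p
      by simp] at this
    have h := this.deriv
    simp only [Function.comp_def] at h
    simp only [partialX]
    exact h
  -- decompose the direction
  have hw : ((1 : ℝ), w)
      = ((1 : ℝ), (0 : Fin 3 → ℝ))
        + ∑ k, w k • (((0 : ℝ), (Pi.single k 1 : Fin 3 → ℝ)) : ℝ × (Fin 3 → ℝ)) := by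
    have h2 : (∑ k, w k • (((0 : ℝ), (Pi.single k 1 : Fin 3 → ℝ)) : ℝ × (Fin 3 → ℝ)))
        = ((0 : ℝ), w) := by
      refine Prod.ext ?_ ?_
      · simp [Prod.fst_sum]
      · simp only [Prod.snd_sum, Prod.smul_snd]
        funext j
        simp [Finset.sum_apply, Pi.single_apply, mul_comm]
    rw [h2]
    simp
  rw [hcomp.deriv, hw, map_add, map_sum, hT]
  congr 1
  refine Finset.sum_congr rfl fun k _ => ?_
  rw [hX k, map_smul, smul_eq_mul]

open Matrix Finset in
private lemma det_row_formula (M : Matrix (Fin 3) (Fin 3) ℝ) :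
    M.det = ∑ σ : Equiv.Perm (Fin 3),
      ((Equiv.Perm.sign σ : ℤ) : ℝ) * ∏ i, M i (σ i) := by
  rw [← Matrix.det_transpose, Matrix.det_apply']
  simp [Matrix.transpose_apply]

open Matrix Finset in
/-- If `∂ₜU + v·∇U = ∇v·U` pointwise, then
`∂ₜ(det U) + v·∇(det U) = (div v)·det U` pointwise. -/
theorem det_deformation_transport
    (v : ℝ × (Fin 3 → ℝ) → Fin 3 → ℝ)
    (U : ℝ × (Fin 3 → ℝ) → Matrix (Fin 3) (Fin 3) ℝ)
    (hv : ∀ i, Differentiable ℝ fun p => v p i)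
    (hU : ∀ i j, Differentiable ℝ fun p => U p i j)
    (heq : ∀ p, ∀ i j : Fin 3,
      partialT (fun q => U q i j) p + ∑ k, v p k * partialX k (fun q => U q i j) p
        = ∑ k, partialX k (fun q => v q i) p * U p k j) :
    ∀ p, partialT (fun q => (U q).det) p
        + ∑ k, v p k * partialX k (fun q => (U q).det) p
      = (∑ k, partialX k (fun q => v q k) p) * (U p).det := by
  classical
  intro p
  set A : Matrix (Fin 3) (Fin 3) ℝ := U p with hA
  set D : Matrix (Fin 3) (Fin 3) ℝ :=
    fun i j => ∑ k, partialX k (fun q => v q i) p * A k j with hD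
  have hp0 : ((p.1 + (0:ℝ), p.2 + (0:ℝ) • v p) : ℝ × (Fin 3 → ℝ)) = p := by simp
  -- differentiability of det ∘ U
  have hdet : Differentiable ℝ (fun q => (U q).det) := by
    have hrw : (fun q => (U q).det)
        = fun q => ∑ σ : Equiv.Perm (Fin 3),
            ((Equiv.Perm.sign σ : ℤ) : ℝ) * ∏ i, U q i (σ i) := by
      funext q; exact det_row_formula (U q)
    rw [hrw]
    refine Differentiable.fun_sum fun σ _ => Differentiable.const_mul ?_ _
    have : ∀ s : Finset (Fin 3), Differentiable ℝ (fun q => ∏ i ∈ s, U q i (σ i)) := by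
      intro s
      induction s using Finset.induction with
      | empty => simpa using differentiable_const (1 : ℝ)
      | insert _ _ h ih =>
        simp only [Finset.prod_insert h]
        exact (hU _ _).mul ih
    exact this Finset.univ
  -- entrywise derivative along the curve
  have hEntry : ∀ i j, HasDerivAt
      (fun s : ℝ => U (p.1 + s, p.2 + s • v p) i j) (D i j) 0 := by
    intro i j
    have hdiff : DifferentiableAt ℝ (fun s : ℝ => U (p.1 + s, p.2 + s • v p) i j) 0 := by
      exact ((hU i j) _).comp 0 (curve_hasDerivAt p (v p)).differentiableAt
    have hval : deriv (fun s : ℝ => U (p.1 + s, p.2 + s • v p) i j) 0 = D i j := by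
      rw [dirDeriv_eq (fun q => U q i j) (hU i j) p (v p), heq p i j]
    exact hval ▸ hdiff.hasDerivAt
  -- derivative of the determinant along the curve
  have hgdet : HasDerivAt (fun s : ℝ => (U (p.1 + s, p.2 + s • v p)).det)
      (∑ σ : Equiv.Perm (Fin 3), ((Equiv.Perm.sign σ : ℤ) : ℝ)
        * ∑ i, (∏ j ∈ Finset.univ.erase i, A j (σ j)) * D i (σ i)) 0 := by
    have hrw : (fun s : ℝ => (U (p.1 + s, p.2 + s • v p)).det)
        = fun s => ∑ σ : Equiv.Perm (Fin 3),
            ((Equiv.Perm.sign σ : ℤ) : ℝ) * ∏ i, U (p.1 + s, p.2 + s • v p) i (σ i) := by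
      funext s; exact det_row_formula _
    rw [hrw]
    refine HasDerivAt.fun_sum fun σ _ => ?_
    have hprod := HasDerivAt.fun_finsetProd
      (u := Finset.univ) (f := fun i (s : ℝ) => U (p.1 + s, p.2 + s • v p) i (σ i))
      (f' := fun i => D i (σ i)) (fun i _ => hEntry i (σ i))
    have hval : (∑ i, (∏ j ∈ Finset.univ.erase i, A j (σ j)) * D i (σ i))
        = ∑ i : Fin 3, (∏ j ∈ Finset.univ.erase i,
            U (p.1 + (0:ℝ), p.2 + (0:ℝ) • v p) j (σ j)) • D i (σ i) := by
      simp only [hp0, ← hA, smul_eq_mul]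
    rw [hval]
    exact hprod.const_mul _
  -- identify the derivative with (div v) * det A
  have hkey : (∑ σ : Equiv.Perm (Fin 3), ((Equiv.Perm.sign σ : ℤ) : ℝ)
        * ∑ i, (∏ j ∈ Finset.univ.erase i, A j (σ j)) * D i (σ i))
      = (∑ k, partialX k (fun q => v q k) p) * A.det := by
    have step1 : (∑ σ : Equiv.Perm (Fin 3), ((Equiv.Perm.sign σ : ℤ) : ℝ)
          * ∑ i, (∏ j ∈ Finset.univ.erase i, A j (σ j)) * D i (σ i))
        = ∑ i, (A.updateRow i (D i)).det := by
      simp only [Finset.mul_sum]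
      rw [Finset.sum_comm]
      refine Finset.sum_congr rfl fun i _ => ?_
      rw [det_row_formula (A.updateRow i (D i))]
      refine Finset.sum_congr rfl fun σ _ => ?_
      have hp : (∏ j, A.updateRow i (D i) j (σ j))
          = D i (σ i) * ∏ j ∈ Finset.univ.erase i, A j (σ j) := by
        rw [← Finset.mul_prod_erase Finset.univ _ (Finset.mem_univ i),
          Matrix.updateRow_self]
        congr 1
        refine Finset.prod_congr rfl fun j hj => ?_
        rw [Matrix.updateRow_ne (Finset.ne_of_mem_erase hj)]
      rw [hp]; ring
    have step2 : ∀ i, (A.updateRow i (D i)).det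
        = partialX i (fun q => v q i) p * A.det := by
      intro i
      have hDi : D i = ∑ k, (partialX k (fun q => v q i) p) • A k := by
        funext j
        simp [hD, Finset.sum_apply]
      rw [hDi, Matrix.det_updateRow_sum, smul_eq_mul]
    rw [step1, Finset.sum_congr rfl fun i _ => step2 i, ← Finset.sum_mul]
  have hfinal := dirDeriv_eq (fun q => (U q).det) hdet p (v p)
  rw [hgdet.deriv, hkey] at hfinal
  rw [← hfinal, hA]
end

section
/- Let v : ℝ × ℝ³ → ℝ³, ρ : ℝ × ℝ³ → ℝ and U : ℝ × ℝ³ → Matrix (Fin 3) (Fin 3) ℝ be differentiable, and suppose that at every point (t, x): (i) ∂ₜρ + Σ_k ∂_{x_k}(ρ·v^k) = 0, and (ii) for all indices i, j: ∂ₜU^{ij} + Σ_k v^k · ∂_{x_k}U^{ij} = Σ_k (∂_{x_k}v^i) · U^{kj}. Then the function g(t, x) = ρ(t, x) · det U(t, x) satisfies the transport equation ∂ₜg + Σ_k v^k · ∂_{x_k}g = 0 at every point. -/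
lemma hasDerivAt_partialT (f : ℝ × (Fin 3 → ℝ) → ℝ) (hf : Differentiable ℝ f)
    (p : ℝ × (Fin 3 → ℝ)) :
    HasDerivAt (fun τ : ℝ => f (τ, p.2)) (partialT f p) p.1 := by
  have h : DifferentiableAt ℝ (fun τ : ℝ => f (τ, p.2)) p.1 :=
    (hf (p.1, p.2)).comp p.1 (differentiableAt_id.prodMk (differentiableAt_const _))
  simpa [partialT] using h.hasDerivAt

lemma hasDerivAt_partialX (k : Fin 3) (f : ℝ × (Fin 3 → ℝ) → ℝ) (hf : Differentiable ℝ f)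
    (p : ℝ × (Fin 3 → ℝ)) :
    HasDerivAt (fun s : ℝ => f (p.1, p.2 + s • (Pi.single k 1 : Fin 3 → ℝ)))
      (partialX k f p) 0 := by
  have h : DifferentiableAt ℝ (fun s : ℝ => f (p.1, p.2 + s • (Pi.single k 1 : Fin 3 → ℝ))) 0 :=
    (hf _).comp 0 ((differentiableAt_const _).prodMk
      ((differentiableAt_const _).add (differentiableAt_id.smul_const _)))
  simpa [partialX] using h.hasDerivAt

def detDeriv (a d : Matrix (Fin 3) (Fin 3) ℝ) : ℝ :=
  (d 0 0 * a 1 1 * a 2 2 + a 0 0 * d 1 1 * a 2 2 + a 0 0 * a 1 1 * d 2 2)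
  - (d 0 0 * a 1 2 * a 2 1 + a 0 0 * d 1 2 * a 2 1 + a 0 0 * a 1 2 * d 2 1)
  - (d 0 1 * a 1 0 * a 2 2 + a 0 1 * d 1 0 * a 2 2 + a 0 1 * a 1 0 * d 2 2)
  + (d 0 1 * a 1 2 * a 2 0 + a 0 1 * d 1 2 * a 2 0 + a 0 1 * a 1 2 * d 2 0)
  + (d 0 2 * a 1 0 * a 2 1 + a 0 2 * d 1 0 * a 2 1 + a 0 2 * a 1 0 * d 2 1)
  - (d 0 2 * a 1 1 * a 2 0 + a 0 2 * d 1 1 * a 2 0 + a 0 2 * a 1 1 * d 2 0)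

lemma hasDerivAt_det3 {m : ℝ → Matrix (Fin 3) (Fin 3) ℝ} {d : Matrix (Fin 3) (Fin 3) ℝ}
    {s : ℝ} (h : ∀ i j, HasDerivAt (fun t => m t i j) (d i j) s) :
    HasDerivAt (fun t => (m t).det) (detDeriv (m s) d) s := by
  have hfun : (fun t => (m t).det)
      = fun t => ((m t 0 0 * m t 1 1 * m t 2 2 - m t 0 0 * m t 1 2 * m t 2 1)
          - m t 0 1 * m t 1 0 * m t 2 2)
        + ((m t 0 1 * m t 1 2 * m t 2 0 + m t 0 2 * m t 1 0 * m t 2 1)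
          - m t 0 2 * m t 1 1 * m t 2 0) := by
    funext t; rw [Matrix.det_fin_three]; ring
  rw [hfun]
  have H := (((((h 0 0).mul (h 1 1)).mul (h 2 2)).sub
      (((h 0 0).mul (h 1 2)).mul (h 2 1))).sub
      (((h 0 1).mul (h 1 0)).mul (h 2 2))).add
    (((((h 0 1).mul (h 1 2)).mul (h 2 0)).add
      (((h 0 2).mul (h 1 0)).mul (h 2 1))).sub
      (((h 0 2).mul (h 1 1)).mul (h 2 0)))
  convert H using 1
  · rfl
  · rfl
  · rfl
  simp only [detDeriv, Pi.mul_apply]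
  ring

/-- If `∂ₜρ + div(ρv) = 0` and `∂ₜU + v·∇U = ∇v·U` pointwise, then
`g = ρ·det U` satisfies the transport equation `∂ₜg + v·∇g = 0` pointwise. -/
theorem rho_det_transport
    (v : ℝ × (Fin 3 → ℝ) → Fin 3 → ℝ)
    (ρ : ℝ × (Fin 3 → ℝ) → ℝ)
    (U : ℝ × (Fin 3 → ℝ) → Matrix (Fin 3) (Fin 3) ℝ)
    (hv : ∀ i, Differentiable ℝ fun p => v p i)
    (hρ : Differentiable ℝ ρ)
    (hU : ∀ i j, Differentiable ℝ fun p => U p i j)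
    (hmass : ∀ p, partialT ρ p + ∑ k, partialX k (fun q => ρ q * v q k) p = 0)
    (heq : ∀ p, ∀ i j : Fin 3,
      partialT (fun q => U q i j) p + ∑ k, v p k * partialX k (fun q => U q i j) p
        = ∑ k, partialX k (fun q => v q i) p * U p k j) :
    ∀ p, partialT (fun q => ρ q * (U q).det) p
        + ∑ k, v p k * partialX k (fun q => ρ q * (U q).det) p = 0 := by
  intro p
  -- product rule for the time derivative of ρ · det U
  have hT0 : partialT (fun q => ρ q * (U q).det) p
      = partialT ρ p * (U p).det
        + ρ p * detDeriv (U p) (fun i j => partialT (fun q => U q i j) p) := by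
    have h1 := hasDerivAt_partialT ρ hρ p
    have h2 : ∀ i j : Fin 3, HasDerivAt (fun τ : ℝ => U (τ, p.2) i j)
        ((fun i j => partialT (fun q => U q i j) p) i j) p.1 :=
      fun i j => hasDerivAt_partialT (fun q => U q i j) (hU i j) p
    have h3 := h1.mul (hasDerivAt_det3 h2)
    have h4 := h3.deriv
    simpa [partialT, Pi.mul_def] using h4
  -- product rule for spatial derivatives of ρ · det U
  have hX0 : ∀ k : Fin 3, partialX k (fun q => ρ q * (U q).det) p
      = partialX k ρ p * (U p).det
        + ρ p * detDeriv (U p) (fun i j => partialX k (fun q => U q i j) p) := by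
    intro k
    have h1 := hasDerivAt_partialX k ρ hρ p
    have h2 : ∀ i j : Fin 3,
        HasDerivAt (fun s : ℝ => U (p.1, p.2 + s • (Pi.single k 1 : Fin 3 → ℝ)) i j)
        ((fun i j => partialX k (fun q => U q i j) p) i j) 0 :=
      fun i j => hasDerivAt_partialX k (fun q => U q i j) (hU i j) p
    have h3 := h1.mul (hasDerivAt_det3 h2)
    have h4 := h3.deriv
    simpa [partialX, Pi.mul_def] using h4
  -- product rule for partialX of ρ·v^k in the mass equation
  have hρv : ∀ k : Fin 3, partialX k (fun q => ρ q * v q k) p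
      = partialX k ρ p * v p k + ρ p * partialX k (fun q => v q k) p := by
    intro k
    have h1 := hasDerivAt_partialX k ρ hρ p
    have h2 := hasDerivAt_partialX k (fun q => v q k) (hv k) p
    have h3 := (h1.mul h2).deriv
    simpa [partialX, Pi.mul_def] using h3
  have M := hmass p
  simp only [Fin.sum_univ_three, hρv] at M
  have E00 := heq p 0 0; have E01 := heq p 0 1; have E02 := heq p 0 2
  have E10 := heq p 1 0; have E11 := heq p 1 1; have E12 := heq p 1 2
  have E20 := heq p 2 0; have E21 := heq p 2 1; have E22 := heq p 2 2
  simp only [Fin.sum_univ_three] at E00 E01 E02 E10 E11 E12 E20 E21 E22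
  rw [hT0]
  simp only [Fin.sum_univ_three]
  rw [hX0 0, hX0 1, hX0 2]
  simp only [detDeriv, Matrix.det_fin_three]
  linear_combination
    (U p 0 0 * U p 1 1 * U p 2 2 - U p 0 0 * U p 1 2 * U p 2 1
      - U p 0 1 * U p 1 0 * U p 2 2 + U p 0 1 * U p 1 2 * U p 2 0
      + U p 0 2 * U p 1 0 * U p 2 1 - U p 0 2 * U p 1 1 * U p 2 0) * M
    + ρ p * ((U p 1 1 * U p 2 2 - U p 1 2 * U p 2 1) * E00
      + (U p 1 2 * U p 2 0 - U p 1 0 * U p 2 2) * E01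
      + (U p 1 0 * U p 2 1 - U p 1 1 * U p 2 0) * E02
      + (U p 0 2 * U p 2 1 - U p 0 1 * U p 2 2) * E10
      + (U p 0 0 * U p 2 2 - U p 0 2 * U p 2 0) * E11
      + (U p 0 1 * U p 2 0 - U p 0 0 * U p 2 1) * E12
      + (U p 0 1 * U p 1 2 - U p 0 2 * U p 1 1) * E20
      + (U p 0 2 * U p 1 0 - U p 0 0 * U p 1 2) * E21
      + (U p 0 0 * U p 1 1 - U p 0 1 * U p 1 0) * E22)
end
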